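/- Let T be a string and suppose T[i..i+2ℓ) is a parameterized square. If E(T[i+1..i+ℓ]) = E(T[i+ℓ+1..i+2ℓ]), then T[i+1..i+2ℓ] is also a parameterized square. -/

import Mathlib

/-- The set of distinct characters of a string. -/
def alph (X : List ℤ) : Set ℤ := {a | a ∈ X}

/-- Parameterized matching. -/
def PMatch (X Y : List ℤ) : Prop :=
  X.length = Y.length ∧ ∃ f : ℤ → ℤ, Set.BijOn f (alph X) (alph Y) ∧ X.map f = Y

/-- E(X) = number of distinct characters of the longest suffix of X[1..|X|-1]
avoiding the character X[|X|]. -/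
def Efun (X : List ℤ) : ℤ :=
  match X.getLast? with
  | none => 0
  | some c => ((X.dropLast.reverse.takeWhile (fun a => a != c)).dedup.length : ℤ)

/-- The substring T[i..i+len) for a 1-indexed position i. -/
def seg (T : List ℤ) (i len : ℕ) : List ℤ := (T.drop (i - 1)).take len

lemma Efun_concat (L : List ℤ) (c : ℤ) :
    Efun (L ++ [c]) = ((L.reverse.takeWhile (fun a => a != c)).toFinset.card : ℤ) := by
  unfold Efun
  rw [List.getLast?_concat, List.dropLast_concat, List.card_toFinset]

lemma toFinset_map_list (f : ℤ → ℤ) (l : List ℤ) :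
    (l.map f).toFinset = Finset.image f l.toFinset := by
  ext x; simp

lemma takeWhile_congr_mem {p q : ℤ → Bool} {l : List ℤ}
    (h : ∀ x ∈ l, p x = q x) : l.takeWhile p = l.takeWhile q := by
  induction l with
  | nil => rfl
  | cons a t ih =>
    simp only [List.takeWhile_cons]
    rw [h a (by simp)]
    cases q a with
    | false => rfl
    | true => simp only [ih fun x hx => h x (by simp [hx])]

lemma takeWhile_decomp (M : List ℤ) (c : ℤ) (hc : c ∈ M) :
    ∃ R, M = M.takeWhile (fun a => a != c) ++ c :: R := by
  have hne : M.dropWhile (fun a => a != c) ≠ [] := by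
    intro h
    have := List.dropWhile_eq_nil_iff.mp h c hc
    simp at this
  have hhead := List.head_dropWhile_not (fun a => a != c) (l := M) hne
  have hcval : (M.dropWhile (fun a => a != c)).head hne = c := by
    simpa using hhead
  refine ⟨(M.dropWhile (fun a => a != c)).tail, ?_⟩
  conv_lhs => rw [← List.takeWhile_append_dropWhile (p := fun a => a != c) (l := M)]
  congr 1
  have h2 := (List.cons_head_tail (l := M.dropWhile (fun a => a != c)) hne).symm
  rw [hcval] at h2
  exact h2

lemma not_mem_takeWhile (M : List ℤ) (c : ℤ) :
    c ∉ M.takeWhile (fun a => a != c) := by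
  intro h
  have := List.mem_takeWhile_imp h
  simp at this

lemma card_takeWhile_lt (M : List ℤ) (c : ℤ) (hc : c ∈ M) :
    (M.takeWhile (fun a => a != c)).toFinset.card < M.toFinset.card := by
  apply Finset.card_lt_card
  rw [Finset.ssubset_iff_of_subset]
  · exact ⟨c, by simpa using hc, by simpa using not_mem_takeWhile M c⟩
  · intro x hx
    simp only [List.mem_toFinset] at hx ⊢
    exact (List.takeWhile_prefix _).sublist.subset hx

lemma takeWhile_card_eq_imp (M : List ℤ) (c d : ℤ) (hc : c ∈ M)
    (h : (M.takeWhile (fun a => a != c)).toFinset.card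
       = (M.takeWhile (fun a => a != d)).toFinset.card) : c = d := by
  by_cases hd : d ∈ M
  · obtain ⟨R, hR⟩ := takeWhile_decomp M c hc
    obtain ⟨S, hS⟩ := takeWhile_decomp M d hd
    set P := M.takeWhile (fun a => a != c) with hP
    set Q := M.takeWhile (fun a => a != d) with hQ
    have hPpre : P <+: M := List.takeWhile_prefix _
    have hQpre : Q <+: M := List.takeWhile_prefix _
    have key : ∀ (P' Q' : List ℤ) (c' : ℤ) (R' : List ℤ), Q' <+: M →
        M = P' ++ c' :: R' → c' ∉ P' → P'.length < Q'.length →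
        P'.toFinset.card < Q'.toFinset.card := by
      intro P' Q' c' R' hQ' hdec hnm hlen
      have hP'c : P' ++ [c'] <+: M := ⟨R', by rw [hdec]; simp⟩
      have hsub : P' ++ [c'] <+: Q' :=
        List.prefix_of_prefix_length_le hP'c hQ' (by simp; omega)
      apply Finset.card_lt_card
      rw [Finset.ssubset_iff_of_subset]
      · refine ⟨c', ?_, by simpa using hnm⟩
        simp only [List.mem_toFinset]
        exact hsub.sublist.subset (by simp)
      · intro x hx
        simp only [List.mem_toFinset] at hx ⊢
        exact hsub.sublist.subset (by simp [hx])
    rcases lt_trichotomy P.length Q.length with hl | hl | hl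
    · exact absurd h (ne_of_lt (key P Q c R hQpre hR (not_mem_takeWhile M c) hl))
    · have hPQ : P = Q := by
        rw [List.prefix_iff_eq_take.mp hPpre, List.prefix_iff_eq_take.mp hQpre, hl]
      have heq : P ++ c :: R = P ++ d :: S := by
        conv_lhs => rw [← hR]
        conv_rhs => rw [hPQ, ← hS]
      have h2 : c = d ∧ R = S := by simpa using heq
      exact h2.1
    · exact absurd h.symm (ne_of_lt (key Q P d S hPpre hS (not_mem_takeWhile M d) hl))
  · exfalso
    have hQ : M.takeWhile (fun a => a != d) = M := by
      rw [List.takeWhile_eq_self_iff]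
      intro x hx
      simp only [bne_iff_ne, ne_eq, decide_eq_true_eq]
      rintro rfl; exact hd hx
    rw [hQ] at h
    exact absurd h (ne_of_lt (card_takeWhile_lt M c hc))

lemma bijOn_alph_of_subset (f : ℤ → ℤ) (L X : List ℤ) (hL : ∀ x ∈ L, x ∈ X)
    (hinj : Set.InjOn f (alph X)) : Set.BijOn f (alph L) (alph (L.map f)) := by
  refine ⟨?_, ?_, ?_⟩
  · intro x hx
    simp only [alph, Set.mem_setOf_eq, List.mem_map] at *
    exact ⟨x, hx, rfl⟩
  · exact hinj.mono fun x hx => hL x hx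
  · intro y hy
    simp only [alph, Set.mem_setOf_eq, List.mem_map] at hy
    obtain ⟨x, hx, rfl⟩ := hy
    exact ⟨x, hx, rfl⟩

lemma key_lemma (Xt W : List ℤ) (a b d : ℤ) (f : ℤ → ℤ)
    (hbij : Set.BijOn f (alph (a :: Xt)) (alph (b :: W)))
    (hmap : (a :: Xt).map f = b :: W)
    (hE : Efun (Xt ++ [b]) = Efun (W ++ [d])) :
    PMatch (Xt ++ [b]) (W ++ [d]) := by
  simp only [List.map_cons, List.cons.injEq] at hmap
  obtain ⟨hfa, hW⟩ := hmap
  subst hW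
  have hinj : Set.InjOn f (alph (a :: Xt)) := hbij.injOn
  have hlen : (Xt ++ [b]).length = (Xt.map f ++ [d]).length := by simp
  rw [Efun_concat, Efun_concat] at hE
  have hEnat : (Xt.reverse.takeWhile (fun x => x != b)).toFinset.card
      = ((Xt.map f).reverse.takeWhile (fun x => x != d)).toFinset.card := by
    exact_mod_cast hE
  have hmemX : ∀ x ∈ Xt, x ∈ alph (a :: Xt) := by
    intro x hx; simp [alph, hx]
  have hcardmap : ∀ (l : List ℤ), (∀ x ∈ l, x ∈ Xt) →
      ((l.map f).toFinset.card = l.toFinset.card) := by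
    intro l hl
    rw [toFinset_map_list, Finset.card_image_of_injOn]
    intro x hx y hy hxy
    simp only [List.coe_toFinset, Set.mem_setOf_eq] at hx hy
    exact hinj (hmemX x (hl x hx)) (hmemX y (hl y hy)) hxy
  by_cases hb : b ∈ Xt
  · -- case B : f b = d, then f itself works
    have hfb : f b = d := by
      apply takeWhile_card_eq_imp ((Xt.map f).reverse) (f b) d
      · simp only [List.mem_reverse, List.mem_map]; exact ⟨b, hb, rfl⟩
      · rw [← hEnat]
        have hmr : (Xt.map f).reverse = Xt.reverse.map f := by
          rw [List.map_reverse]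
        rw [hmr, List.takeWhile_map]
        have hcong : Xt.reverse.takeWhile ((fun x => x != f b) ∘ f)
            = Xt.reverse.takeWhile (fun x => x != b) := by
          apply takeWhile_congr_mem
          intro x hx
          simp only [List.mem_reverse] at hx
          simp only [Function.comp]
          by_cases hxb : x = b
          · subst hxb; simp
          · have hne : f x ≠ f b := by
              intro hfeq
              exact hxb (hinj (hmemX x hx) (hmemX b hb) hfeq)
            simp [bne, hxb, hne]
        rw [hcong]
        apply hcardmap
        intro x hx
        exact List.mem_reverse.mp ((List.takeWhile_prefix _).sublist.subset hx)
    refine ⟨hlen, f, ?_, by simp [hfb]⟩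
    have hrw : Xt.map f ++ [d] = (Xt ++ [b]).map f := by simp [hfb]
    rw [hrw]
    apply bijOn_alph_of_subset f (Xt ++ [b]) (a :: Xt) ?_ hinj
    intro x hx
    rcases List.mem_append.mp hx with h1 | h1
    · exact List.mem_cons_of_mem a h1
    · simp only [List.mem_singleton] at h1
      subst h1
      exact List.mem_cons_of_mem a hb
  · -- case A : b ∉ Xt, so d ∉ W and swap-in map works
    have h1 : Xt.reverse.takeWhile (fun x => x != b) = Xt.reverse := by
      rw [List.takeWhile_eq_self_iff]
      intro x hx
      simp only [List.mem_reverse] at hx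
      simp only [bne_iff_ne, ne_eq, decide_eq_true_eq]
      rintro rfl; exact hb hx
    have hd : d ∉ Xt.map f := by
      intro hdW
      have hlt := card_takeWhile_lt ((Xt.map f).reverse) d (by simpa using hdW)
      rw [h1] at hEnat
      rw [List.toFinset_reverse] at hlt
      rw [hcardmap Xt (fun x hx => hx)] at hlt
      simp only [List.toFinset_reverse] at hEnat
      omega
    set g : ℤ → ℤ := fun x => if x = b then d else f x with hg
    have hgXt : Xt.map g = Xt.map f := by
      apply List.map_congr_left
      intro x hx
      simp only [hg]
      rw [if_neg]
      rintro rfl; exact hb hx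
    refine ⟨hlen, g, ?_, ?_⟩
    · constructor
      · -- MapsTo
        intro x hx
        simp only [alph, Set.mem_setOf_eq, List.mem_append, List.mem_singleton] at hx ⊢
        rcases hx with hx | rfl
        · left
          have : g x = f x := by
            simp only [hg]; rw [if_neg]; rintro rfl; exact hb hx
          rw [this]
          exact List.mem_map_of_mem (f := f) hx
        · right; simp [hg]
      constructor
      · -- InjOn
        intro x hx y hy hxy
        simp only [alph, Set.mem_setOf_eq, List.mem_append, List.mem_singleton] at hx hy
        have gval : ∀ z, z ∈ Xt ∨ z = b → (z = b ∧ g z = d) ∨ (z ∈ Xt ∧ g z = f z) := by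
          intro z hz
          rcases hz with hz | rfl
          · right
            refine ⟨hz, ?_⟩
            simp only [hg]; rw [if_neg]; rintro rfl; exact hb hz
          · left; simp [hg]
        rcases gval x hx with ⟨hx1, hx2⟩ | ⟨hx1, hx2⟩ <;>
          rcases gval y hy with ⟨hy1, hy2⟩ | ⟨hy1, hy2⟩
        · rw [hx1, hy1]
        · exfalso; rw [hx2, hy2] at hxy
          exact hd (hxy ▸ List.mem_map_of_mem (f := f) hy1)
        · exfalso; rw [hx2, hy2] at hxy
          exact hd (hxy.symm ▸ List.mem_map_of_mem (f := f) hx1)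
        · rw [hx2, hy2] at hxy
          exact hinj (hmemX x hx1) (hmemX y hy1) hxy
      · -- SurjOn
        intro y hy
        simp only [alph, Set.mem_setOf_eq, List.mem_append, List.mem_singleton] at hy
        rcases hy with hy | rfl
        · obtain ⟨x, hx, rfl⟩ := List.mem_map.mp hy
          refine ⟨x, ?_, ?_⟩
          · simp [alph, hx]
          · simp only [hg]; rw [if_neg]; rintro rfl; exact hb hx
        · refine ⟨b, ?_, ?_⟩
          · simp [alph]
          · simp [hg]
    · rw [List.map_append, hgXt]
      simp [hg]

lemma shift_lemma (A : List ℤ) (ℓ : ℕ) (h1 : 1 ≤ ℓ) (h : ℓ < A.length) :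
    (A.drop 1).take ℓ = (A.take ℓ).tail ++ [((A.drop ℓ).take ℓ).headI] := by
  have hne : A.drop ℓ ≠ [] := by
    rw [ne_eq, List.drop_eq_nil_iff]; omega
  have hhead : ((A.drop ℓ).take ℓ).headI = A[ℓ] := by
    obtain ⟨c, L', hcL⟩ := List.exists_cons_of_ne_nil hne
    have hc : c = A[ℓ] := by
      have hh : (A.drop ℓ)[0]'(by rw [hcL]; simp) = c := by simp [hcL]
      rw [List.getElem_drop] at hh
      simpa using hh.symm
    obtain ⟨m, rfl⟩ : ∃ m, ℓ = m + 1 := ⟨ℓ - 1, by omega⟩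
    rw [hcL, List.take_succ_cons]
    simpa using hc
  rw [hhead]
  apply List.ext_getElem
  · simp only [List.length_take, List.length_drop, List.length_append,
      List.length_tail, List.length_cons, List.length_nil]
    omega
  · intro j hj1 hj2
    have hlen1 : ((A.take ℓ).tail).length = ℓ - 1 := by simp; omega
    rw [List.getElem_take, List.getElem_drop, List.getElem_append]
    split
    · rename_i hj3
      rw [hlen1] at hj3
      rw [List.getElem_tail, List.getElem_take]
      congr 1
      omega
    · rename_i hj3
      rw [hlen1] at hj3
      have hj4 : j = ℓ - 1 := by
        simp only [List.length_take, List.length_drop] at hj1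
        omega
      simp only [List.getElem_singleton]
      congr 1
      omega

theorem psquare_shift_of_encoding_eq
    (T : List ℤ) (i ℓ : ℕ)
    (hi : 1 ≤ i) (hℓ : 1 ≤ ℓ) (hbound : i + 2 * ℓ ≤ T.length)
    (hsq : PMatch (seg T i ℓ) (seg T (i + ℓ) ℓ))
    (hE : Efun (seg T (i + 1) ℓ) = Efun (seg T (i + ℓ + 1) ℓ)) :
    PMatch (seg T (i + 1) ℓ) (seg T (i + ℓ + 1) ℓ) := by
  set A := T.drop (i - 1) with hA
  have hAlen : 2 * ℓ < A.length := by
    rw [hA, List.length_drop]; omega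
  have hseg1 : seg T i ℓ = A.take ℓ := rfl
  have hseg2 : seg T (i + ℓ) ℓ = (A.drop ℓ).take ℓ := by
    rw [seg, hA, List.drop_drop]
    congr 2
    omega
  have hseg3 : seg T (i + 1) ℓ = (A.drop 1).take ℓ := by
    rw [seg, hA, List.drop_drop]
    congr 2
    omega
  have hseg4 : seg T (i + ℓ + 1) ℓ = ((A.drop ℓ).drop 1).take ℓ := by
    rw [seg, hA, List.drop_drop, List.drop_drop]
    congr 2
    omega
  have hsh1 : (A.drop 1).take ℓ
      = (A.take ℓ).tail ++ [((A.drop ℓ).take ℓ).headI] :=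
    shift_lemma A ℓ hℓ (by omega)
  have hsh2 : ((A.drop ℓ).drop 1).take ℓ
      = ((A.drop ℓ).take ℓ).tail ++ [(((A.drop ℓ).drop ℓ).take ℓ).headI] :=
    shift_lemma (A.drop ℓ) ℓ hℓ (by rw [List.length_drop]; omega)
  -- nonemptiness of the two halves
  have hXne : A.take ℓ ≠ [] := by
    intro hn
    have := congrArg List.length hn
    simp only [List.length_take, List.length_nil] at this
    omega
  have hYne : (A.drop ℓ).take ℓ ≠ [] := by
    intro hn
    have := congrArg List.length hn
    simp only [List.length_take, List.length_drop, List.length_nil] at this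
    omega
  obtain ⟨a, Xt, hXcons⟩ := List.exists_cons_of_ne_nil hXne
  obtain ⟨b, W, hYcons⟩ := List.exists_cons_of_ne_nil hYne
  obtain ⟨hlen0, f, hbij, hmap⟩ := hsq
  rw [hseg1, hseg2, hXcons, hYcons] at hbij hmap
  have e1 : seg T (i + 1) ℓ = Xt ++ [b] := by
    rw [hseg3, hsh1, hXcons, hYcons]
    rfl
  have e2 : seg T (i + ℓ + 1) ℓ = W ++ [(((A.drop ℓ).drop ℓ).take ℓ).headI] := by
    rw [hseg4, hsh2, hYcons]
    rfl
  rw [e1, e2] at hE ⊢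
  exact key_lemma Xt W a b _ f hbij hmap hE
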